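/- There exist permutations σ₁, σ₂, σ₃ of {1, …, 26} such that σ₁ ∘ σ₂ ∘ σ₃ = id, the subgroup generated by σ₁, σ₂, σ₃ acts transitively on {1, …, 26}, and the multisets of orbit sizes of the cyclic groups generated by σ₁, σ₂, σ₃ are, respectively, {10,5,3,2,1,1,1,1,1,1}, {7,6,2,2,2,2,2,1,1,1}, and {10,9,4,3}. -/

import Mathlib

/-- The number of orbits of the cyclic group generated by a permutation `σ`
(i.e., the number of cycles of `σ`, counting fixed points as cycles of length 1). -/
noncomputable def cycleCount {α : Type*} [Finite α] (σ : Equiv.Perm α) : ℕ :=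
  Nat.card (MulAction.orbitRel.Quotient (Subgroup.zpowers σ) α)

/-- The multiset of sizes of the orbits of the cyclic group generated by a permutation `σ`
(i.e., the cycle type of `σ`, with fixed points contributing parts equal to 1). -/
noncomputable def orbitSizes {α : Type*} [Finite α] (σ : Equiv.Perm α) : Multiset ℕ :=
  letI := Fintype.ofFinite (MulAction.orbitRel.Quotient (Subgroup.zpowers σ) α)
  (Finset.univ : Finset (MulAction.orbitRel.Quotient (Subgroup.zpowers σ) α)).val.map
    fun q => Nat.card q.orbit

section Aux

open MulAction Function

lemma aux_count_bind_repl (M : Multiset ℕ) (s : ℕ) :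
    ((M.bind fun t => Multiset.replicate t t).count s) = M.count s * s := by
  induction M using Multiset.induction_on with
  | empty => simp
  | cons a M ih =>
      rw [Multiset.cons_bind, Multiset.count_add, ih, Multiset.count_cons,
        Multiset.count_replicate]
      by_cases h : a = s <;> simp [h, Nat.add_mul] <;> omega

lemma aux_bind_repl_inj {M N : Multiset ℕ} (hM : 0 ∉ M) (hN : 0 ∉ N)
    (h : (M.bind fun t => Multiset.replicate t t) = N.bind fun t => Multiset.replicate t t) :
    M = N := by
  ext s
  rcases Nat.eq_zero_or_pos s with rfl | hs
  · rw [Multiset.count_eq_zero_of_notMem hM, Multiset.count_eq_zero_of_notMem hN]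
  · have := congrArg (Multiset.count s) h
    rw [aux_count_bind_repl, aux_count_bind_repl] at this
    exact Nat.eq_of_mul_eq_mul_right hs this

lemma aux_minimalPeriod_eq {α : Type*} [DecidableEq α] (σ : Equiv.Perm α) (x : α) (k : ℕ)
    (hk : 0 < k) (h1 : (σ ^ k) x = x)
    (h2 : ∀ m ∈ Nat.properDivisors k, (σ ^ m) x ≠ x) :
    Function.minimalPeriod σ x = k := by
  have hp : Function.IsPeriodicPt σ k x := by
    rw [Function.IsPeriodicPt, Function.IsFixedPt, ← Equiv.Perm.coe_pow]; exact h1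
  have hdvd : Function.minimalPeriod σ x ∣ k := Function.IsPeriodicPt.minimalPeriod_dvd hp
  by_contra hne
  have hmem : Function.minimalPeriod σ x ∈ Nat.properDivisors k :=
    Nat.mem_properDivisors.mpr ⟨hdvd, lt_of_le_of_ne (Nat.le_of_dvd hk hdvd) hne⟩
  exact h2 _ hmem (by
    rw [Equiv.Perm.coe_pow]
    exact Function.isPeriodicPt_minimalPeriod σ x)

lemma aux_orbitSizes_eq {α : Type*} [Fintype α] [DecidableEq α]
    (σ : Equiv.Perm α) (T : Multiset ℕ) (h0 : 0 ∉ T)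
    (h : Multiset.map (fun x => Function.minimalPeriod σ x) Finset.univ.val
        = T.bind fun s => Multiset.replicate s s) :
    orbitSizes σ = T := by
  classical
  letI iQ : Fintype (orbitRel.Quotient (Subgroup.zpowers σ) α) := Fintype.ofFinite _
  letI iO : ∀ q : orbitRel.Quotient (Subgroup.zpowers σ) α, Fintype q.orbit :=
    fun q => Fintype.ofFinite _
  have hcard : ∀ x : α, Function.minimalPeriod σ x
      = Nat.card (orbit (Subgroup.zpowers σ) x) := by
    intro x
    letI : Fintype (orbit (Subgroup.zpowers σ) x) := Fintype.ofFinite _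
    rw [Nat.card_eq_fintype_card]
    have := MulAction.minimalPeriod_eq_card (a := σ) (b := x)
    simpa using this
  set g : orbitRel.Quotient (Subgroup.zpowers σ) α → ℕ := fun q => Nat.card q.orbit with hg
  have horb : orbitSizes σ = Multiset.map g Finset.univ.val := rfl
  rw [horb]
  have key : Multiset.map (fun x => Function.minimalPeriod σ x) Finset.univ.val
      = (Multiset.map g Finset.univ.val).bind fun s => Multiset.replicate s s := by
    rw [Multiset.bind_map]
    set e := selfEquivSigmaOrbits' (Subgroup.zpowers σ) α with he
    have huniv : (Finset.univ.val : Multiset α)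
        = Multiset.map e.symm Finset.univ.val := (Multiset.map_univ_val_equiv e.symm).symm
    rw [huniv, Multiset.map_map]
    have hsig : (Finset.univ.val :
          Multiset (Σ q : orbitRel.Quotient (Subgroup.zpowers σ) α, q.orbit))
        = Finset.univ.val.bind fun q => Multiset.map (Sigma.mk q) Finset.univ.val := rfl
    rw [hsig, Multiset.map_bind]
    congr 1
    funext q
    rw [Multiset.map_map]
    have hpt : ∀ y : q.orbit,
        Function.minimalPeriod σ (e.symm ⟨q, y⟩) = g q := by
      intro y
      have hy : e.symm ⟨q, y⟩ = (y : α) := rfl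
      have hmem : (y : α) ∈ q.orbit := y.2
      have hq : q.orbit = orbit (Subgroup.zpowers σ) (y : α) := by
        obtain ⟨z, rfl⟩ := Quotient.exists_rep q
        rw [orbitRel.Quotient.mem_orbit] at hmem
        have h2 : (y : α) ∈ orbit (Subgroup.zpowers σ) z :=
          (MulAction.orbitRel_apply).mp (Quotient.eq''.mp hmem)
        exact (orbitRel.Quotient.orbit_mk z).trans (MulAction.orbit_eq_iff.mpr h2).symm
      simp only [hy, hcard, hg, hq]
    have hmapc : Multiset.map (((fun x => Function.minimalPeriod σ x) ∘ ⇑e.symm) ∘ Sigma.mk q)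
        (Finset.univ.val) = Multiset.map (fun _ => g q) Finset.univ.val :=
      Multiset.map_congr rfl fun y _ => hpt y
    rw [hmapc, Multiset.map_const']
    congr 1
    rw [Finset.card_val, Finset.card_univ, hg]
    exact (Nat.card_eq_fintype_card).symm
  apply aux_bind_repl_inj _ h0
  · rw [← key, h]
  · intro hmem
    rw [Multiset.mem_map] at hmem
    obtain ⟨q, -, hq⟩ := hmem
    have : Nonempty q.orbit := (orbitRel.Quotient.nonempty_orbit q).to_subtype
    exact (Nat.card_pos (α := q.orbit)).ne' hq

end Aux

def permF1 : Fin 26 → Fin 26 :=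
  ![3, 25, 11, 24, 2, 5, 6, 23, 13, 20, 1, 21, 17, 12, 8, 15, 16, 14, 9, 19, 18, 10, 22, 7, 4, 0]
def permG1 : Fin 26 → Fin 26 :=
  ![25, 10, 4, 0, 24, 5, 6, 23, 14, 18, 21, 2, 13, 8, 17, 15, 16, 12, 20, 19, 9, 11, 22, 7, 3, 1]
def permF2 : Fin 26 → Fin 26 :=
  ![14, 2, 13, 12, 23, 3, 9, 7, 8, 6, 22, 15, 11, 24, 0, 10, 18, 19, 16, 17, 21, 1, 5, 4, 20, 25]
def permG2 : Fin 26 → Fin 26 :=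
  ![14, 21, 1, 5, 23, 22, 9, 7, 8, 6, 15, 12, 3, 2, 0, 11, 18, 19, 16, 17, 24, 20, 10, 4, 13, 25]

def sigma1 : Equiv.Perm (Fin 26) :=
  ⟨permF1, permG1, by decide, by decide⟩
def sigma2 : Equiv.Perm (Fin 26) :=
  ⟨permF2, permG2, by decide, by decide⟩
def sigma3 : Equiv.Perm (Fin 26) := (sigma1 * sigma2)⁻¹

def per1 : Fin 26 → ℕ :=
  ![10, 10, 10, 10, 10, 1, 1, 2, 5, 3, 10, 10, 5, 5, 5, 1, 1, 5, 3, 1, 3, 10, 1, 2, 10, 10]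
def per2 : Fin 26 → ℕ :=
  ![2, 6, 6, 7, 2, 7, 2, 1, 1, 2, 7, 7, 7, 6, 2, 7, 2, 2, 2, 2, 6, 6, 7, 2, 6, 1]
def per3 : Fin 26 → ℕ :=
  ![10, 3, 10, 4, 10, 9, 9, 10, 10, 9, 9, 3, 10, 10, 4, 3, 9, 4, 9, 4, 9, 10, 9, 10, 9, 10]

lemma minper (σ : Equiv.Perm (Fin 26)) (p : Fin 26 → ℕ)
    (hA : ∀ x : Fin 26, 0 < p x)
    (hB : ∀ x : Fin 26, (σ ^ p x) x = x)
    (hC : ∀ x : Fin 26, ∀ m ∈ Nat.properDivisors (p x), (σ ^ m) x ≠ x)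
    (x : Fin 26) : Function.minimalPeriod σ x = p x :=
  aux_minimalPeriod_eq σ x (p x) (hA x) (hB x) (hC x)

theorem realizable_triple_8 :
    ∃ σ₁ σ₂ σ₃ : Equiv.Perm (Fin 26),
      σ₁ * σ₂ * σ₃ = 1 ∧
      (∀ x y : Fin 26,
        ∃ g ∈ Subgroup.closure ({σ₁, σ₂, σ₃} : Set (Equiv.Perm (Fin 26))), g x = y) ∧
      orbitSizes σ₁ = ({10, 5, 3, 2, 1, 1, 1, 1, 1, 1} : Multiset ℕ) ∧
      orbitSizes σ₂ = ({7, 6, 2, 2, 2, 2, 2, 1, 1, 1} : Multiset ℕ) ∧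
      orbitSizes σ₃ = ({10, 9, 4, 3} : Multiset ℕ) := by
  refine ⟨sigma1, sigma2, sigma3, mul_inv_cancel _, ?_, ?_, ?_, ?_⟩
  · -- transitivity
    set S : Set (Equiv.Perm (Fin 26)) := {sigma1, sigma2, sigma3} with hS
    have h1 : sigma1 ∈ Subgroup.closure S :=
      Subgroup.subset_closure (by simp [hS])
    have h2 : sigma2 ∈ Subgroup.closure S :=
      Subgroup.subset_closure (by simp [hS])
    have hw : sigma1 * (sigma1 * sigma2) ∈ Subgroup.closure S :=
      mul_mem h1 (mul_mem h1 h2)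
    have key : ∀ x : Fin 26, ∃ n : Fin 26,
        ((sigma1 * (sigma1 * sigma2)) ^ (n : ℕ)) 0 = x ∨
        (sigma1 * (sigma1 * (sigma1 * sigma2)) ^ (n : ℕ)) 0 = x ∨
        (sigma2 * (sigma1 * (sigma1 * sigma2)) ^ (n : ℕ)) 0 = x := by decide
    have main : ∀ x : Fin 26, ∃ g ∈ Subgroup.closure S, g 0 = x := by
      intro x
      obtain ⟨n, hn⟩ := key x
      have hwn : (sigma1 * (sigma1 * sigma2)) ^ (n : ℕ) ∈ Subgroup.closure S := pow_mem hw _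
      rcases hn with hn | hn | hn
      exacts [⟨_, hwn, hn⟩, ⟨_, mul_mem h1 hwn, hn⟩, ⟨_, mul_mem h2 hwn, hn⟩]
    intro x y
    obtain ⟨gx, hgx, hgx0⟩ := main x
    obtain ⟨gy, hgy, hgy0⟩ := main y
    refine ⟨gy * gx⁻¹, mul_mem hgy (inv_mem hgx), ?_⟩
    rw [← hgx0, ← hgy0]
    simp [Equiv.Perm.mul_apply]
  · refine aux_orbitSizes_eq _ _ (by decide) ?_
    rw [Multiset.map_congr rfl fun x _ => minper sigma1 per1 (by decide) (by decide) (by decide) x]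
    decide
  · refine aux_orbitSizes_eq _ _ (by decide) ?_
    rw [Multiset.map_congr rfl fun x _ => minper sigma2 per2 (by decide) (by decide) (by decide) x]
    decide
  · refine aux_orbitSizes_eq _ _ (by decide) ?_
    rw [Multiset.map_congr rfl fun x _ => minper sigma3 per3 (by decide) (by set_option maxRecDepth 100000 in decide) (by set_option maxRecDepth 100000 in decide) x]
    decide
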